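/- For every rational number λ with 0 < λ < 1 there exists an NFA A_λ over a unary alphabet {a} such that A_λ is λ-memoryless-stochastically-resolvable, but for every ε > 0 the automaton A_λ is not (λ + ε)-memoryless-stochastically-resolvable. -/

import Mathlib

open scoped BigOperators

/-- A nondeterministic finite automaton over alphabet `σ` with states `Q`:
an initial state, a finite set of transitions and a finite set of accepting states. -/
structure NFA' (σ Q : Type) where
  init : Q
  trans : Finset (Q × σ × Q)
  accept : Finset Q

namespace NFA'

variable {σ Q : Type}

/-- `IsRun Δ p w ts r`: `ts` is a run on the word `w` from state `p` to state `r`,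
using transitions from `Δ`. -/
inductive IsRun (Δ : Finset (Q × σ × Q)) : Q → List σ → List (Q × σ × Q) → Q → Prop
  | nil (q : Q) : IsRun Δ q [] [] q
  | cons {p : Q} {a : σ} {q r : Q} {w : List σ} {ts : List (Q × σ × Q)} :
      (p, a, q) ∈ Δ → IsRun Δ q w ts r → IsRun Δ p (a :: w) ((p, a, q) :: ts) r

/-- `ts` is an accepting run of `A` on `w`. -/
def AccRun (A : NFA' σ Q) (w : List σ) (ts : List (Q × σ × Q)) : Prop :=
  ∃ r ∈ A.accept, IsRun A.trans A.init w ts r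

/-- The language of `A`: words admitting an accepting run. -/
def lang (A : NFA' σ Q) : Set (List σ) := {w | ∃ ts, A.AccRun w ts}

/-- `δ(q, u)`: the set of states reachable from `q` by a run on `u`. -/
def reach (A : NFA' σ Q) (q : Q) (u : List σ) : Set Q :=
  {r | ∃ ts, IsRun A.trans q u ts r}

/-- The word `u` admits an accepting run from the state `q`. -/
def AccFrom (A : NFA' σ Q) (q : Q) (u : List σ) : Prop :=
  ∃ r ∈ A.accept, ∃ ts, IsRun A.trans q u ts r

/-- `A_S`: the automaton `A` with transitions restricted to `S`. -/
def restrict (A : NFA' σ Q) (S : Finset (Q × σ × Q)) : NFA' σ Q :=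
  { A with trans := S }

/-- `A` is `k`-ambiguous: every word has at most `k` accepting runs. -/
def kAmbiguous (A : NFA' σ Q) (k : ℕ) : Prop :=
  ∀ w, {ts | A.AccRun w ts}.encard ≤ (k : ℕ∞)

/-- `A` is finitely-ambiguous. -/
def FinitelyAmbiguous (A : NFA' σ Q) : Prop := ∃ k : ℕ, 0 < k ∧ A.kAmbiguous k

/-- A memoryless stochastic resolver for `A`: probabilities, supported on the transitions
of `A`, summing to one over the outgoing transitions of every pair `(p, a)` that has at
least one outgoing transition (implicitly, `A` is completed with a non-accepting sink). -/
structure Resolver (A : NFA' σ Q) where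
  r : Q × σ × Q → ℝ
  nonneg : ∀ t, 0 ≤ r t
  le_one : ∀ t, r t ≤ 1
  supp : ∀ t, r t ≠ 0 → t ∈ A.trans
  sum_one : ∀ p a, (∃ q, (p, a, q) ∈ A.trans) →
      ∑ t ∈ A.trans, {t : Q × σ × Q | t.1 = p ∧ t.2.1 = a}.indicator r t = 1

/-- The probability of a run: the product of the probabilities of its transitions. -/
def runProb (f : Q × σ × Q → ℝ) (ts : List (Q × σ × Q)) : ℝ := (ts.map f).prod

/-- The acceptance probability of a word: the sum, over all accepting runs, of the
product of the transition probabilities along the run. -/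
noncomputable def accProb (A : NFA' σ Q) (f : Q × σ × Q → ℝ) (w : List σ) : ℝ :=
  ∑ᶠ ts ∈ {ts | A.AccRun w ts}, runProb f ts

/-- `A` is `λ`-memoryless-stochastically-resolvable. -/
def Resolvable (A : NFA' σ Q) (lam : ℝ) : Prop :=
  ∃ R : A.Resolver, {w | lam ≤ A.accProb R.r w} = A.lang

/-- `A` is positively (memoryless stochastically) resolvable. -/
def PositivelyResolvable (A : NFA' σ Q) : Prop :=
  ∃ lam : ℝ, 0 < lam ∧ A.Resolvable lam

/-- The support `S` is bad: no resolver whose support is exactly `S` witnesses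
positive resolvability. -/
def BadSupport (A : NFA' σ Q) (S : Finset (Q × σ × Q)) : Prop :=
  ∀ R : A.Resolver, (∀ t, R.r t ≠ 0 ↔ t ∈ S) →
    ∀ lam : ℝ, 0 < lam → {w | lam ≤ A.accProb R.r w} ≠ A.lang

/-- A transition is nondeterministic in `S`. -/
def NondetIn (S : Finset (Q × σ × Q)) (t : Q × σ × Q) : Prop :=
  t ∈ S ∧ ∃ q', q' ≠ t.2.2 ∧ (t.1, t.2.1, q') ∈ S

/-- The number of transitions of a run that are nondeterministic in `S`. -/
noncomputable def nondetCount (S : Finset (Q × σ × Q)) (ts : List (Q × σ × Q)) : ℕ :=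
  (ts.map (Set.indicator {t | NondetIn S t} (fun _ => 1))).sum

/-- `b(w)`: the minimal number of `S`-nondeterministic transitions over all accepting
runs of `w` in `A_S`. -/
noncomputable def minNondet (A : NFA' σ Q) (S : Finset (Q × σ × Q)) (w : List σ) : ℕ :=
  sInf {m | ∃ ts, (A.restrict S).AccRun w ts ∧ nondetCount S ts = m}

/-- The state of a run `ts` (started in `q0`) after `n` transitions. -/
def stateAt (q0 : Q) (ts : List (Q × σ × Q)) (n : ℕ) : Q :=
  match (ts.take n).getLast? with
  | some t => t.2.2
  | none => q0

/-- `Θ` makes `A` into a probabilistic finite automaton (PFA) based on `A`. -/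
def IsPFA (A : NFA' σ Q) (Θ : Q × σ × Q → ℝ) : Prop :=
  (∀ t ∈ A.trans, 0 < Θ t ∧ Θ t ≤ 1) ∧ (∀ t, t ∉ A.trans → Θ t = 0) ∧
  ∀ p a, (∃ q, (p, a, q) ∈ A.trans) →
    ∑ t ∈ A.trans, {t : Q × σ × Q | t.1 = p ∧ t.2.1 = a}.indicator Θ t = 1

/-- The PFA is simple: every transition has probability `1/2` or `1`. -/
def IsSimple (A : NFA' σ Q) (Θ : Q × σ × Q → ℝ) : Prop :=
  ∀ t ∈ A.trans, Θ t = 1/2 ∨ Θ t = 1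

end NFA'

open NFA'

namespace AuxStmt0

open NFA'

variable {q : ℕ} [NeZero q]

/-- The cycle state `c_z`. -/
def cc (q : ℕ) [NeZero q] (z : ZMod q) : Fin (q+1) :=
  ⟨z.val + 1, by have := ZMod.val_lt z; omega⟩

lemma cc_ne_zero (z : ZMod q) : cc q z ≠ 0 := by
  simp [cc, Fin.ext_iff]

lemma cc_inj : Function.Injective (cc q) := by
  intro a b h
  have : a.val = b.val := by simpa [cc, Fin.ext_iff] using h
  exact ZMod.val_injective q this

/-- The automaton `A_{p/q}`. -/
def Au (p q : ℕ) [NeZero q] : NFA' Unit (Fin (q+1)) where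
  init := 0
  trans := (Finset.univ.image fun z : ZMod q => ((0 : Fin (q+1)), (), cc q z)) ∪
    (Finset.univ.image fun z : ZMod q => (cc q z, (), cc q (z+1)))
  accept := (Finset.univ.filter fun z : ZMod q => z.val < p).image (cc q)

lemma mem_trans_iff {p : ℕ} {t : Fin (q+1) × Unit × Fin (q+1)} :
    t ∈ (Au p q).trans ↔ (∃ z, t = ((0 : Fin (q+1)), (), cc q z)) ∨
      (∃ z, t = (cc q z, (), cc q (z+1))) := by
  simp [Au, eq_comm]

lemma trans_from_zero {p : ℕ} {x : Fin (q+1)}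
    (h : ((0 : Fin (q+1)), (), x) ∈ (Au p q).trans) : ∃ z, x = cc q z := by
  rcases mem_trans_iff.mp h with ⟨z, hz⟩ | ⟨z, hz⟩
  · exact ⟨z, by simpa using congrArg (fun t => t.2.2) hz⟩
  · exact absurd (congrArg (fun t => t.1) hz) (by simpa using (cc_ne_zero z).symm)

lemma trans_from_cc {p : ℕ} {z : ZMod q} {x : Fin (q+1)}
    (h : (cc q z, (), x) ∈ (Au p q).trans) : x = cc q (z+1) := by
  rcases mem_trans_iff.mp h with ⟨w, hw⟩ | ⟨w, hw⟩
  · exact absurd (congrArg (fun t => t.1) hw) (by simpa using cc_ne_zero z)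
  · have h1 : cc q z = cc q w := congrArg (fun t => t.1) hw
    have h2 : x = cc q (w+1) := congrArg (fun t => t.2.2) hw
    rw [h2, cc_inj h1]

lemma cc_mem_trans₁ (p : ℕ) (z : ZMod q) :
    ((0 : Fin (q+1)), (), cc q z) ∈ (Au p q).trans := mem_trans_iff.mpr (Or.inl ⟨z, rfl⟩)

lemma cc_mem_trans₂ (p : ℕ) (z : ZMod q) :
    (cc q z, (), cc q (z+1)) ∈ (Au p q).trans := mem_trans_iff.mpr (Or.inr ⟨z, rfl⟩)

lemma mem_accept_iff {p : ℕ} {x : Fin (q+1)} :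
    x ∈ (Au p q).accept ↔ ∃ z : ZMod q, z.val < p ∧ x = cc q z := by
  simp [Au, eq_comm]

/-- The deterministic cycle run of length `i` starting at `c_z`. -/
def cycleRun (q : ℕ) [NeZero q] : ZMod q → ℕ → List (Fin (q+1) × Unit × Fin (q+1))
  | _, 0 => []
  | z, (i+1) => (cc q z, (), cc q (z+1)) :: cycleRun q (z+1) i

lemma cycleRun_succ (z : ZMod q) (i : ℕ) :
    cycleRun q z (i+1) = (cc q z, (), cc q (z+1)) :: cycleRun q (z+1) i := rfl

lemma isRun_nil_inv {Δ : Finset (Fin (q+1) × Unit × Fin (q+1))} {s r : Fin (q+1)}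
    {ts : List _} (h : IsRun Δ s [] ts r) : ts = [] ∧ r = s := by
  cases h; exact ⟨rfl, rfl⟩

lemma cycleRun_isRun (p : ℕ) : ∀ (i : ℕ) (z : ZMod q),
    IsRun (Au p q).trans (cc q z) (List.replicate i ()) (cycleRun q z i) (cc q (z + i)) := by
  intro i
  induction i with
  | zero => intro z; simpa [cycleRun] using IsRun.nil (Δ := (Au p q).trans) (cc q z)
  | succ i ih =>
    intro z
    rw [cycleRun_succ, List.replicate_succ]
    have := ih (z + 1)
    have hz : z + 1 + (i : ZMod q) = z + ((i+1 : ℕ) : ZMod q) := by push_cast; ring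
    rw [hz] at this
    exact IsRun.cons (cc_mem_trans₂ p z) this

lemma run_from_cc (p : ℕ) : ∀ (i : ℕ) (z : ZMod q) (ts : List _) (r : Fin (q+1)),
    IsRun (Au p q).trans (cc q z) (List.replicate i ()) ts r →
      ts = cycleRun q z i ∧ r = cc q (z + i) := by
  intro i
  induction i with
  | zero =>
    intro z ts r h
    obtain ⟨h1, h2⟩ := isRun_nil_inv h
    exact ⟨by simp [h1, cycleRun], by simp [h2]⟩
  | succ i ih =>
    intro z ts r h
    rw [List.replicate_succ] at h
    cases h with
    | cons hmem htail =>
      rename_i x ts'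
      have hx : x = cc q (z+1) := trans_from_cc hmem
      subst hx
      obtain ⟨h1, h2⟩ := ih (z+1) ts' r htail
      constructor
      · rw [cycleRun_succ, h1]
      · rw [h2]; congr 1; push_cast; ring

/-- The full accepting-candidate run: first step to `c_z`, then `i` cycle steps. -/
def fullRun (q : ℕ) [NeZero q] (i : ℕ) (z : ZMod q) :
    List (Fin (q+1) × Unit × Fin (q+1)) :=
  ((0 : Fin (q+1)), (), cc q z) :: cycleRun q z i

lemma fullRun_inj (i : ℕ) : Function.Injective (fullRun q i) := by
  intro a b h
  have : cc q a = cc q b := by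
    simpa [fullRun] using congrArg (fun l => (l.headI).2.2) h
  exact cc_inj this

lemma accRun_iff (p : ℕ) (i : ℕ) (ts : List (Fin (q+1) × Unit × Fin (q+1))) :
    (Au p q).AccRun (List.replicate (i+1) ()) ts ↔
      ∃ z : ZMod q, (z + (i : ZMod q)).val < p ∧ ts = fullRun q i z := by
  constructor
  · rintro ⟨r, hr, hrun⟩
    rw [List.replicate_succ] at hrun
    cases hrun with
    | cons hmem htail =>
      rename_i x ts'
      obtain ⟨z, hz⟩ := trans_from_zero hmem
      subst hz
      obtain ⟨h1, h2⟩ := run_from_cc p i z ts' r htail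
      refine ⟨z, ?_, by rw [h1]; rfl⟩
      rw [h2] at hr
      obtain ⟨w, hw, hcw⟩ := mem_accept_iff.mp hr
      rwa [cc_inj hcw]
  · rintro ⟨z, hz, rfl⟩
    refine ⟨cc q (z + i), mem_accept_iff.mpr ⟨z + i, hz, rfl⟩, ?_⟩
    rw [List.replicate_succ]
    exact IsRun.cons (cc_mem_trans₁ p z) (cycleRun_isRun p i z)

lemma accRun_set_eq (p i : ℕ) :
    {ts | (Au p q).AccRun (List.replicate (i+1) ()) ts} =
      ↑(((Finset.univ.filter fun z : ZMod q => (z + (i : ZMod q)).val < p)).image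
        (fullRun q i)) := by
  ext ts
  simp only [Set.mem_setOf_eq, Finset.coe_image, Set.mem_image, Finset.mem_coe,
    Finset.mem_filter, Finset.mem_univ, true_and, accRun_iff p i ts]
  constructor
  · rintro ⟨z, hz, rfl⟩; exact ⟨z, hz, rfl⟩
  · rintro ⟨z, hz, rfl⟩; exact ⟨z, hz, rfl⟩

lemma accRun_nil_empty (p : ℕ) : {ts | (Au p q).AccRun ([] : List Unit) ts} = ∅ := by
  ext ts
  simp only [Set.mem_setOf_eq, Set.mem_empty_iff_false, iff_false]
  rintro ⟨r, hr, hrun⟩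
  obtain ⟨-, h2⟩ := isRun_nil_inv hrun
  obtain ⟨z, -, hz⟩ := mem_accept_iff.mp hr
  exact cc_ne_zero z (by rw [← hz, h2]; rfl)

lemma accProb_nil (p : ℕ) (f : Fin (q+1) × Unit × Fin (q+1) → ℝ) :
    (Au p q).accProb f [] = 0 := by
  rw [accProb, accRun_nil_empty p, finsum_mem_empty]

lemma accProb_succ (p i : ℕ) (f : Fin (q+1) × Unit × Fin (q+1) → ℝ) :
    (Au p q).accProb f (List.replicate (i+1) ()) =
      ∑ z ∈ Finset.univ.filter (fun z : ZMod q => (z + (i : ZMod q)).val < p),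
        runProb f (fullRun q i z) := by
  rw [accProb, accRun_set_eq p i, finsum_mem_coe_finset,
    Finset.sum_image (fun a _ b _ h => fullRun_inj i h)]

/-- Sum over transitions of the indicator at source `0`. -/
lemma trans_disjoint (p : ℕ) : Disjoint
    (Finset.univ.image fun z : ZMod q => ((0 : Fin (q+1)), (), cc q z))
    (Finset.univ.image fun z : ZMod q => (cc q z, (), cc q (z+1))) := by
  rw [Finset.disjoint_left]
  rintro t ht1 ht2
  simp only [Finset.mem_image, Finset.mem_univ, true_and] at ht1 ht2
  obtain ⟨a, rfl⟩ := ht1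
  obtain ⟨b, hb⟩ := ht2
  exact cc_ne_zero b (by simpa using (congrArg (fun t => t.1) hb))

lemma sum_indicator_zero (p : ℕ) (f : Fin (q+1) × Unit × Fin (q+1) → ℝ) :
    ∑ t ∈ (Au p q).trans,
        ({t : Fin (q+1) × Unit × Fin (q+1) | t.1 = 0 ∧ t.2.1 = ()}).indicator f t =
      ∑ z : ZMod q, f ((0 : Fin (q+1)), (), cc q z) := by
  classical
  rw [show (Au p q).trans = _ ∪ _ from rfl, Finset.sum_union (trans_disjoint p),
    Finset.sum_image (fun a _ b _ h => cc_inj (by simpa using congrArg (fun t => t.2.2) h)),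
    Finset.sum_image (fun a _ b _ h => cc_inj (by simpa using congrArg (fun t => t.1) h)),
    Finset.sum_congr rfl (fun z _ =>
      Set.indicator_of_mem (show _ ∈ {t : Fin (q+1) × Unit × Fin (q+1) | t.1 = 0 ∧ t.2.1 = ()}
        from ⟨rfl, rfl⟩) f),
    Finset.sum_congr rfl (fun z _ =>
      Set.indicator_of_notMem
        (show (cc q z, (), cc q (z+1)) ∉
            {t : Fin (q+1) × Unit × Fin (q+1) | t.1 = 0 ∧ t.2.1 = ()}
          from fun hc => cc_ne_zero z hc.1) f),
    Finset.sum_const_zero, add_zero]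

/-- Sum over transitions of the indicator at source `c_z`. -/
lemma sum_indicator_cc (p : ℕ) (z : ZMod q) (f : Fin (q+1) × Unit × Fin (q+1) → ℝ) :
    ∑ t ∈ (Au p q).trans,
        ({t : Fin (q+1) × Unit × Fin (q+1) | t.1 = cc q z ∧ t.2.1 = ()}).indicator f t =
      f (cc q z, (), cc q (z+1)) := by
  classical
  rw [show (Au p q).trans = _ ∪ _ from rfl, Finset.sum_union (trans_disjoint p),
    Finset.sum_image (fun a _ b _ h => cc_inj (by simpa using congrArg (fun t => t.2.2) h)),
    Finset.sum_image (fun a _ b _ h => cc_inj (by simpa using congrArg (fun t => t.1) h)),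
    Finset.sum_congr rfl (fun w _ =>
      Set.indicator_of_notMem
        (show ((0 : Fin (q+1)), (), cc q w) ∉
            {t : Fin (q+1) × Unit × Fin (q+1) | t.1 = cc q z ∧ t.2.1 = ()}
          from fun hc => cc_ne_zero z hc.1.symm) f)]
  have hterm : ∀ w : ZMod q, ∀ _ : w ∈ (Finset.univ : Finset (ZMod q)),
      ({t : Fin (q+1) × Unit × Fin (q+1) | t.1 = cc q z ∧ t.2.1 = ()}).indicator f
        (cc q w, (), cc q (w+1)) =
      if w = z then f (cc q w, (), cc q (w+1)) else 0 := by
    intro w _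
    by_cases hw : w = z
    · subst hw
      rw [Set.indicator_of_mem
        (show _ ∈ {t : Fin (q+1) × Unit × Fin (q+1) | t.1 = cc q w ∧ t.2.1 = ()}
          from ⟨rfl, rfl⟩) f, if_pos rfl]
    · rw [Set.indicator_of_notMem
        (show (cc q w, (), cc q (w+1)) ∉
            {t : Fin (q+1) × Unit × Fin (q+1) | t.1 = cc q z ∧ t.2.1 = ()}
          from fun hc => hw (cc_inj hc.1)) f, if_neg hw]
  rw [Finset.sum_congr rfl hterm,
    Finset.sum_ite_eq' Finset.univ z (fun w => f (cc q w, (), cc q (w+1))),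
    if_pos (Finset.mem_univ z), Finset.sum_const_zero, zero_add]

lemma resolver_cyc {p : ℕ} (R : (Au p q).Resolver) (z : ZMod q) :
    R.r (cc q z, (), cc q (z+1)) = 1 := by
  have := R.sum_one (cc q z) () ⟨cc q (z+1), cc_mem_trans₂ p z⟩
  rwa [sum_indicator_cc p z R.r] at this

lemma resolver_cycleRun {p : ℕ} (R : (Au p q).Resolver) :
    ∀ (i : ℕ) (z : ZMod q), runProb R.r (cycleRun q z i) = 1 := by
  intro i
  induction i with
  | zero => intro z; simp [cycleRun, runProb]
  | succ i ih =>
    intro z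
    rw [cycleRun_succ, runProb, List.map_cons, List.prod_cons, resolver_cyc R z, one_mul]
    exact ih (z+1)

lemma resolver_sum_branches {p : ℕ} (R : (Au p q).Resolver) :
    ∑ z : ZMod q, R.r ((0 : Fin (q+1)), (), cc q z) = 1 := by
  have := R.sum_one (0 : Fin (q+1)) () ⟨cc q 0, cc_mem_trans₁ p 0⟩
  rwa [sum_indicator_zero p R.r] at this

lemma resolver_accProb {p : ℕ} (R : (Au p q).Resolver) (i : ℕ) :
    (Au p q).accProb R.r (List.replicate (i+1) ()) =
      ∑ z ∈ Finset.univ.filter (fun z : ZMod q => (z + (i : ZMod q)).val < p),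
        R.r ((0 : Fin (q+1)), (), cc q z) := by
  rw [accProb_succ p i R.r]
  apply Finset.sum_congr rfl
  intro z _
  rw [fullRun, runProb, List.map_cons, List.prod_cons]
  have := resolver_cycleRun R i z
  rw [runProb] at this
  rw [this, mul_one]

lemma card_val_lt {p : ℕ} (hpq : p ≤ q) :
    (Finset.univ.filter fun w : ZMod q => w.val < p).card = p := by
  classical
  have h : (Finset.univ.filter fun w : ZMod q => w.val < p).card = (Finset.range p).card := by
    refine Finset.card_nbij' (fun w => w.val) (fun j => (j : ZMod q)) ?_ ?_ ?_ ?_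
    · intro w hw
      simp only [Finset.mem_coe, Finset.mem_filter] at hw
      simpa using hw.2
    · intro j hj
      simp only [Finset.mem_coe, Finset.mem_range] at hj
      simp only [Finset.mem_coe, Finset.mem_filter, Finset.mem_univ, true_and]
      rw [ZMod.val_cast_of_lt (lt_of_lt_of_le hj hpq)]
      exact hj
    · intro w _
      exact ZMod.natCast_rightInverse w
    · intro j hj
      simp only [Finset.mem_coe, Finset.mem_range] at hj
      exact ZMod.val_cast_of_lt (lt_of_lt_of_le hj hpq)
  rw [h, Finset.card_range]

lemma card_window {p : ℕ} (hpq : p ≤ q) (x : ZMod q) :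
    (Finset.univ.filter fun z : ZMod q => (x + z).val < p).card = p := by
  classical
  have h : (Finset.univ.filter fun z : ZMod q => (x + z).val < p).card =
      (Finset.univ.filter fun w : ZMod q => w.val < p).card := by
    refine Finset.card_nbij' (fun z => x + z) (fun w => w - x) ?_ ?_ ?_ ?_
    · intro z hz
      simp only [Finset.mem_coe, Finset.mem_filter, Finset.mem_univ, true_and] at hz ⊢
      exact hz
    · intro w hw
      simp only [Finset.mem_coe, Finset.mem_filter, Finset.mem_univ, true_and] at hw ⊢
      rw [show x + (w - x) = w by ring]
      exact hw
    · intro z _; ring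
    · intro w _; ring
  rw [h, card_val_lt hpq]

lemma card_window' {p : ℕ} (hpq : p ≤ q) (x : ZMod q) :
    (Finset.univ.filter fun z : ZMod q => (z + x).val < p).card = p := by
  classical
  have h : (Finset.univ.filter fun z : ZMod q => (z + x).val < p).card =
      (Finset.univ.filter fun w : ZMod q => w.val < p).card := by
    refine Finset.card_nbij' (fun z => z + x) (fun w => w - x) ?_ ?_ ?_ ?_
    · intro z hz
      simp only [Finset.mem_coe, Finset.mem_filter, Finset.mem_univ, true_and] at hz ⊢
      exact hz
    · intro w hw
      simp only [Finset.mem_coe, Finset.mem_filter, Finset.mem_univ, true_and] at hw ⊢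
      rw [show w - x + x = w by ring]
      exact hw
    · intro z _; ring
    · intro w _; ring
  rw [h, card_val_lt hpq]

lemma card_window_range {p : ℕ} (hpq : p ≤ q) (z : ZMod q) :
    ((Finset.range q).filter fun i : ℕ => (z + ((i : ℕ) : ZMod q)).val < p).card = p := by
  classical
  have h : ((Finset.range q).filter fun i : ℕ => (z + ((i : ℕ) : ZMod q)).val < p).card =
      (Finset.univ.filter fun w : ZMod q => (z + w).val < p).card := by
    refine Finset.card_nbij' (fun i => ((i : ℕ) : ZMod q)) (fun w => w.val) ?_ ?_ ?_ ?_
    · intro i hi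
      simp only [Finset.mem_coe, Finset.mem_filter, Finset.mem_range] at hi
      simp only [Finset.mem_coe, Finset.mem_filter, Finset.mem_univ, true_and]
      exact hi.2
    · intro w hw
      simp only [Finset.mem_coe, Finset.mem_filter, Finset.mem_univ, true_and] at hw
      simp only [Finset.mem_coe, Finset.mem_filter, Finset.mem_range]
      refine ⟨ZMod.val_lt w, ?_⟩
      rwa [ZMod.natCast_rightInverse w]
    · intro i hi
      simp only [Finset.mem_coe, Finset.mem_filter, Finset.mem_range] at hi
      exact ZMod.val_cast_of_lt hi.1
    · intro w _
      exact ZMod.natCast_rightInverse w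
  rw [h, card_window hpq z]

lemma lang_eq {p : ℕ} (hp : 0 < p) : (Au p q).lang = {w : List Unit | w ≠ []} := by
  ext w
  have hw : w = List.replicate w.length () := List.eq_replicate_length.mpr (fun _ _ => rfl)
  rw [hw]
  cases hlen : w.length with
  | zero =>
    simp only [List.replicate_zero, Set.mem_setOf_eq, ne_eq, not_true_eq_false, iff_false]
    rintro ⟨ts, hts⟩
    have h := accRun_nil_empty (q := q) p
    have hmem : ts ∈ {ts | (Au p q).AccRun ([] : List Unit) ts} := hts
    rw [h] at hmem
    exact hmem
  | succ i =>
    simp only [Set.mem_setOf_eq, ne_eq, List.replicate_succ, reduceCtorEq,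
      not_false_eq_true, iff_true]
    rw [← List.replicate_succ]
    refine ⟨fullRun q i (-(i : ZMod q)), (accRun_iff p i _).mpr ⟨-(i : ZMod q), ?_, rfl⟩⟩
    simpa using hp

lemma resolver_sum_words {p : ℕ} (hpq : p ≤ q) (R : (Au p q).Resolver) :
    ∑ i ∈ Finset.range q, (Au p q).accProb R.r (List.replicate (i+1) ()) = p := by
  classical
  have h1 : ∀ i ∈ Finset.range q, (Au p q).accProb R.r (List.replicate (i+1) ()) =
      ∑ z : ZMod q, if (z + (i : ZMod q)).val < p then R.r ((0 : Fin (q+1)), (), cc q z)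
        else 0 := by
    intro i _
    rw [resolver_accProb R i, Finset.sum_filter]
  rw [Finset.sum_congr rfl h1, Finset.sum_comm]
  have h2 : ∀ z : ZMod q,
      (∑ i ∈ Finset.range q, if (z + (i : ZMod q)).val < p then
          R.r ((0 : Fin (q+1)), (), cc q z) else 0) =
        (p : ℝ) * R.r ((0 : Fin (q+1)), (), cc q z) := by
    intro z
    rw [← Finset.sum_filter, Finset.sum_const, card_window_range hpq z, nsmul_eq_mul]
  rw [Finset.sum_congr rfl (fun z _ => h2 z), ← Finset.mul_sum,
    resolver_sum_branches R, mul_one]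

/-- The uniform resolver. -/
noncomputable def R0 (p q : ℕ) [NeZero q] (hq : 0 < q) : (Au p q).Resolver where
  r := fun t => if t ∈ (Au p q).trans then
    (if t.1 = (0 : Fin (q+1)) then (q : ℝ)⁻¹ else 1) else 0
  nonneg := by
    intro t
    split_ifs
    · positivity
    · norm_num
    · exact le_refl 0
  le_one := by
    intro t
    have h1 : (q : ℝ)⁻¹ ≤ 1 := by
      rw [inv_le_one_iff₀]
      right
      exact_mod_cast hq
    split_ifs <;> norm_num [h1]
  supp := by
    intro t ht
    by_contra hmem
    simp only [hmem, if_false, ne_eq, not_true_eq_false] at ht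
  sum_one := by
    intro s a hex
    obtain ⟨q', hq'⟩ := hex
    have hqR : (q : ℝ) ≠ 0 := Nat.cast_ne_zero.mpr hq.ne'
    rcases mem_trans_iff.mp hq' with ⟨z, hz⟩ | ⟨z, hz⟩
    · have hs : s = 0 := congrArg (fun t => t.1) hz
      subst hs
      rw [sum_indicator_zero p]
      have h1 : ∀ w : ZMod q, ((0 : Fin (q+1)), (), cc q w) ∈ (Au p q).trans :=
        cc_mem_trans₁ p
      simp only [h1, if_true, eq_self_iff_true]
      rw [Finset.sum_const, Finset.card_univ, ZMod.card, nsmul_eq_mul,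
        mul_inv_cancel₀ hqR]
    · have hs : s = cc q z := congrArg (fun t => t.1) hz
      subst hs
      rw [sum_indicator_cc p]
      have h2 : (cc q z, (), cc q (z+1)) ∈ (Au p q).trans := cc_mem_trans₂ p z
      simp only [h2, if_true]
      rw [if_neg (by simpa using cc_ne_zero z)]

end AuxStmt0


/-- For every rational `0 < λ < 1` there is a unary NFA that is `λ`-resolvable
but not `(λ + ε)`-resolvable for any `ε > 0`. -/
theorem stmt0 (lam : ℚ) (h0 : 0 < lam) (h1 : lam < 1) :
    ∃ (n : ℕ) (A : NFA' Unit (Fin n)),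
      A.Resolvable ((lam : ℝ)) ∧ ∀ ε : ℝ, 0 < ε → ¬ A.Resolvable ((lam : ℝ) + ε) := by
  classical
  set p : ℕ := lam.num.toNat with hpdef
  set q : ℕ := lam.den with hqdef
  haveI : NeZero q := ⟨lam.den_nz⟩
  have hnum : 0 < lam.num := Rat.num_pos.mpr h0
  have hp : 0 < p := by omega
  have hq : 0 < q := lam.pos
  have hnd : lam.num < (lam.den : ℤ) := by
    exact_mod_cast Rat.lt_one_iff_num_lt_denom.mpr h1
  have hpq : p < q := by omega
  have hnumcast : (lam.num : ℝ) = (p : ℝ) := by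
    rw [hpdef]
    exact_mod_cast (Int.toNat_of_nonneg hnum.le).symm
  have hlam : (lam : ℝ) = (p : ℝ) / (q : ℝ) := by
    rw [Rat.cast_def, hnumcast, hqdef]
  have hqR : (0 : ℝ) < (q : ℝ) := by exact_mod_cast hq
  refine ⟨q + 1, AuxStmt0.Au p q, ?_, ?_⟩
  · -- λ-resolvable, via the uniform resolver
    refine ⟨AuxStmt0.R0 p q hq, ?_⟩
    rw [AuxStmt0.lang_eq hp]
    ext w
    have hw : w = List.replicate w.length () := List.eq_replicate_length.mpr (fun _ _ => rfl)
    rw [Set.mem_setOf_eq, Set.mem_setOf_eq, hw]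
    cases hlen : w.length with
    | zero =>
      simp only [List.replicate_zero, AuxStmt0.accProb_nil p, ne_eq, not_true_eq_false,
        iff_false, not_le]
      exact_mod_cast h0
    | succ i =>
      have hval : (AuxStmt0.Au p q).accProb (AuxStmt0.R0 p q hq).r
          (List.replicate (i+1) ()) = (lam : ℝ) := by
        rw [AuxStmt0.resolver_accProb (AuxStmt0.R0 p q hq) i]
        have hterm : ∀ z : ZMod q, (AuxStmt0.R0 p q hq).r
            ((0 : Fin (q+1)), (), AuxStmt0.cc q z) = (q : ℝ)⁻¹ := by
          intro z
          show (if _ then _ else _) = _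
          rw [if_pos (AuxStmt0.cc_mem_trans₁ p z), if_pos rfl]
        rw [Finset.sum_congr rfl (fun z _ => hterm z), Finset.sum_const,
          AuxStmt0.card_window' hpq.le, nsmul_eq_mul, hlam]
        field_simp
      rw [hval]
      simp
  · -- not (λ+ε)-resolvable
    intro ε hε ⟨R, hR⟩
    have hsum : ∑ i ∈ Finset.range q, (AuxStmt0.Au p q).accProb R.r
        (List.replicate (i+1) ()) = (p : ℝ) := AuxStmt0.resolver_sum_words hpq.le R
    have hlb : ∀ i ∈ Finset.range q,
        (lam : ℝ) + ε ≤ (AuxStmt0.Au p q).accProb R.r (List.replicate (i+1) ()) := by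
      intro i _
      have hmem : List.replicate (i+1) () ∈ (AuxStmt0.Au p q).lang := by
        rw [AuxStmt0.lang_eq hp]
        simp [List.replicate_succ]
      rw [← hR] at hmem
      exact hmem
    have h2 : (q : ℝ) * ((lam : ℝ) + ε) ≤ (p : ℝ) := by
      calc (q : ℝ) * ((lam : ℝ) + ε) = ∑ _i ∈ Finset.range q, ((lam : ℝ) + ε) := by
            rw [Finset.sum_const, Finset.card_range, nsmul_eq_mul]
        _ ≤ ∑ i ∈ Finset.range q, (AuxStmt0.Au p q).accProb R.r
              (List.replicate (i+1) ()) := Finset.sum_le_sum hlb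
        _ = (p : ℝ) := hsum
    have h3 : (q : ℝ) * (lam : ℝ) = (p : ℝ) := by
      rw [hlam]
      field_simp
    nlinarith
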